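/- Let (P_n) be a sequence of orthogonal projections on a Hilbert space H converging strongly to the identity, and let A be a bounded operator on H. If there exist n₀ and C > 0 such that for all n ≥ n₀ the operators P_n A P_n : Im P_n → Im P_n are invertible with ‖(P_n A P_n)^{−1} P_n‖ ≤ C, then A is injective and has closed range; if moreover A* satisfies the same hypothesis, then A is invertible. -/

import Mathlib

open Filter Topology

/-- Stability of the Galerkin sequence `(PₙAPₙ)`: for `n ≥ n₀` the operators
`PₙAPₙ : Im Pₙ → Im Pₙ` are invertible with `‖(PₙAPₙ)⁻¹Pₙ‖ ≤ C`, expressed via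
operators `B = (PₙAPₙ)⁻¹Pₙ` on `H`. -/
def GalerkinStable {H : Type*} [NormedAddCommGroup H] [InnerProductSpace ℂ H]
    [CompleteSpace H] (P : ℕ → H →L[ℂ] H) (A : H →L[ℂ] H) (n₀ : ℕ) (C : ℝ) : Prop :=
  ∀ n ≥ n₀, ∃ B : H →L[ℂ] H,
    (∀ x : H, B x = B (P n x)) ∧
    (∀ x : H, B (P n (A (P n x))) = P n x) ∧
    (∀ x : H, P n (A (P n (B x))) = P n x) ∧
    ‖B‖ ≤ C

lemma proj_norm_le' {H : Type*} [NormedAddCommGroup H] [InnerProductSpace ℂ H]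
    [CompleteSpace H] (Q : H →L[ℂ] H) (h1 : IsIdempotentElem Q) (h2 : IsSelfAdjoint Q) (y : H) :
    ‖Q y‖ ≤ ‖y‖ := by
  rcases eq_or_ne (Q y) 0 with h | h
  · simp [h, norm_nonneg]
  · have hQQ : Q (Q y) = Q y := by
      have := congrArg (fun T : H →L[ℂ] H => T y) h1
      simpa [ContinuousLinearMap.mul_apply] using this
    have hinner : (inner ℂ (Q y) (Q y) : ℂ) = inner ℂ y (Q y) := by
      have hadj : (inner ℂ (Q y) (Q y) : ℂ) = inner ℂ y (Q (Q y)) := by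
        have := h2.adjoint_eq
        rw [← ContinuousLinearMap.adjoint_inner_right Q y (Q y), this]
      rw [hadj, hQQ]
    have hn : ‖Q y‖ ^ 2 = ‖(inner ℂ (Q y) (Q y) : ℂ)‖ := by
      rw [inner_self_eq_norm_sq_to_K]; simp
    have hle : ‖(inner ℂ y (Q y) : ℂ)‖ ≤ ‖y‖ * ‖Q y‖ := norm_inner_le_norm y (Q y)
    have : ‖Q y‖ ^ 2 ≤ ‖y‖ * ‖Q y‖ := by rw [hn, hinner]; exact hle
    have hpos : 0 < ‖Q y‖ := norm_pos_iff.mpr h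
    nlinarith

lemma galerkin_lower_bound {H : Type*} [NormedAddCommGroup H] [InnerProductSpace ℂ H]
    [CompleteSpace H] (P : ℕ → H →L[ℂ] H)
    (hproj : ∀ n, IsIdempotentElem (P n) ∧ IsSelfAdjoint (P n))
    (hP : ∀ x : H, Tendsto (fun n => P n x) atTop (𝓝 x))
    (A : H →L[ℂ] H) (n₀ : ℕ) (C : ℝ) (hC : 0 < C)
    (hstab : GalerkinStable P A n₀ C) (x : H) : ‖x‖ ≤ C * ‖A x‖ := by
  have hbound : ∀ n ≥ n₀, ‖P n x‖ ≤ C * ‖A (P n x)‖ := by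
    intro n hn
    obtain ⟨B, -, hB2, -, hBn⟩ := hstab n hn
    calc ‖P n x‖ = ‖B (P n (A (P n x)))‖ := by rw [hB2]
      _ ≤ ‖B‖ * ‖P n (A (P n x))‖ := B.le_opNorm _
      _ ≤ C * ‖P n (A (P n x))‖ := by
          apply mul_le_mul_of_nonneg_right hBn (norm_nonneg _)
      _ ≤ C * ‖A (P n x)‖ := by
          apply mul_le_mul_of_nonneg_left _ hC.le
          exact proj_norm_le' (P n) (hproj n).1 (hproj n).2 _
  have h1 : Tendsto (fun n => ‖P n x‖) atTop (𝓝 ‖x‖) := (hP x).norm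
  have h2 : Tendsto (fun n => C * ‖A (P n x)‖) atTop (𝓝 (C * ‖A x‖)) := by
    have : Tendsto (fun n => A (P n x)) atTop (𝓝 (A x)) :=
      (A.continuous.tendsto (x)).comp (hP x)
    exact (this.norm).const_mul C
  exact le_of_tendsto_of_tendsto h1 h2 (eventually_atTop.mpr ⟨n₀, hbound⟩)

theorem stability_implies_invertibility {H : Type*} [NormedAddCommGroup H]
    [InnerProductSpace ℂ H] [CompleteSpace H]
    (P : ℕ → H →L[ℂ] H)
    (hproj : ∀ n, IsIdempotentElem (P n) ∧ IsSelfAdjoint (P n))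
    (hP : ∀ x : H, Tendsto (fun n => P n x) atTop (𝓝 x))
    (A : H →L[ℂ] H) (n₀ : ℕ) (C : ℝ) (hC : 0 < C)
    (hstab : GalerkinStable P A n₀ C) :
    Function.Injective A ∧ IsClosed (Set.range A) ∧
      ((∃ n₀' C', 0 < C' ∧ GalerkinStable P (ContinuousLinearMap.adjoint A) n₀' C') →
        IsUnit A) := by
  have hlow : ∀ x : H, ‖x‖ ≤ C * ‖A x‖ :=
    galerkin_lower_bound P hproj hP A n₀ C hC hstab
  have hanti : AntilipschitzWith C.toNNReal A := by
    apply A.antilipschitz_of_bound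
    intro x
    simpa [Real.coe_toNNReal _ hC.le] using hlow x
  have hinj : Function.Injective A := hanti.injective
  have hclosed : IsClosed (Set.range A) :=
    hanti.isClosed_range A.uniformContinuous
  refine ⟨hinj, hclosed, ?_⟩
  rintro ⟨n₀', C', hC', hstab'⟩
  have hlow' : ∀ x : H, ‖x‖ ≤ C' * ‖(ContinuousLinearMap.adjoint A) x‖ :=
    galerkin_lower_bound P hproj hP _ n₀' C' hC' hstab'
  have hinj' : Function.Injective (ContinuousLinearMap.adjoint A) := by
    have : AntilipschitzWith C'.toNNReal (ContinuousLinearMap.adjoint A) := by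
      apply ContinuousLinearMap.antilipschitz_of_bound
      intro x
      simpa [Real.coe_toNNReal _ hC'.le] using hlow' x
    exact this.injective
  -- range A is a closed submodule
  set K : Submodule ℂ H := LinearMap.range (A : H →ₗ[ℂ] H) with hK
  have hKclosed : IsClosed (K : Set H) := by
    simpa [hK, LinearMap.coe_range] using hclosed
  haveI : CompleteSpace K := hKclosed.completeSpace_coe
  have hKtop : K = ⊤ := by
    rw [← Submodule.orthogonal_eq_bot_iff]
    rw [Submodule.eq_bot_iff]
    intro y hy
    apply hinj'
    rw [map_zero]
    apply ext_inner_right ℂ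
    intro z
    have hmem : (A z) ∈ K := LinearMap.mem_range_self _ z
    rw [ContinuousLinearMap.adjoint_inner_left, inner_zero_left, ← inner_conj_symm,
      (Submodule.mem_orthogonal K y).mp hy (A z) hmem, map_zero]
  have hker : LinearMap.ker (A : H →ₗ[ℂ] H) = ⊥ := LinearMap.ker_eq_bot.mpr hinj
  let e := ContinuousLinearEquiv.ofBijective A hker hKtop
  refine ⟨⟨A, e.symm.toContinuousLinearMap, ?_, ?_⟩, rfl⟩
  · ext x
    simp only [ContinuousLinearMap.mul_apply, ContinuousLinearMap.one_apply,
      ContinuousLinearEquiv.coe_coe]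
    exact ContinuousLinearEquiv.ofBijective_apply_symm_apply A hker hKtop x
  · ext x
    simp only [ContinuousLinearMap.mul_apply, ContinuousLinearMap.one_apply,
      ContinuousLinearEquiv.coe_coe]
    exact ContinuousLinearEquiv.ofBijective_symm_apply_apply A hker hKtop x
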